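/- Every connected graph G admits a universal triangular covering map p : G̃ → G, i.e., a triangular covering map whose domain G̃ is triangularly simply connected. -/

import Mathlib

open SimpleGraph

/-- The closed neighbourhood of a vertex. -/
def closedNbhd {V : Type*} (G : SimpleGraph V) (v : V) : Set V := insert v (G.neighborSet v)

/-- A triangular covering map: a graph homomorphism between connected graphs whose
restriction to each closed neighbourhood is an isomorphism onto the closed
neighbourhood of the image vertex. -/
structure IsTriangularCover {V' V : Type*} {G' : SimpleGraph V'} {G : SimpleGraph V}
    (p : G' →g G) : Prop where
  connDom : G'.Connected
  connCod : G.Connected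
  injOn : ∀ v : V', Set.InjOn p (closedNbhd G' v)
  surjOn : ∀ v : V', Set.SurjOn p (closedNbhd G' v) (closedNbhd G (p v))
  reflectAdj : ∀ v x y : V', x ∈ closedNbhd G' v → y ∈ closedNbhd G' v →
    G.Adj (p x) (p y) → G'.Adj x y

/-- Elementary moves on walks (recorded as lists of vertices): triangle
removal/insertion and dead end removal/insertion. -/
inductive ElemMove {V : Type*} (G : SimpleGraph V) : List V → List V → Prop
  | triRemove (l₁ l₂ : List V) (a b c : V) (h₁ : G.Adj a b) (h₂ : G.Adj b c) (h₃ : G.Adj a c) :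
      ElemMove G (l₁ ++ a :: b :: c :: l₂) (l₁ ++ a :: c :: l₂)
  | triInsert (l₁ l₂ : List V) (a b c : V) (h₁ : G.Adj a b) (h₂ : G.Adj b c) (h₃ : G.Adj a c) :
      ElemMove G (l₁ ++ a :: c :: l₂) (l₁ ++ a :: b :: c :: l₂)
  | deadEndRemove (l₁ l₂ : List V) (a b : V) (h : G.Adj a b) :
      ElemMove G (l₁ ++ a :: b :: a :: l₂) (l₁ ++ a :: l₂)
  | deadEndInsert (l₁ l₂ : List V) (a b : V) (h : G.Adj a b) :
      ElemMove G (l₁ ++ a :: l₂) (l₁ ++ a :: b :: a :: l₂)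

/-- Two walks are homotopic if one can be transformed into the other by a finite
sequence of elementary moves. -/
def Homotopic {V : Type*} (G : SimpleGraph V) : List V → List V → Prop :=
  Relation.ReflTransGen (ElemMove G)

/-- A graph is triangularly simply connected if it is connected and every closed walk
is homotopic to a trivial walk. -/
def TriSimplyConnected {V : Type*} (G : SimpleGraph V) : Prop :=
  G.Connected ∧ ∀ (v : V) (l : List V), (v :: l).Chain' G.Adj →
    (v :: l).getLast (List.cons_ne_nil v l) = v → Homotopic G (v :: l) [v]

universe u

theorem List.chain'_append {α : Type*} {R : α → α → Prop} {l₁ l₂ : List α} :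
    List.Chain' R (l₁ ++ l₂) ↔ List.Chain' R l₁ ∧ List.Chain' R l₂ ∧
      ∀ x ∈ l₁.getLast?, ∀ y ∈ l₂.head?, R x y := List.isChain_append

theorem List.chain'_cons {α : Type*} {R : α → α → Prop} {a b : α} {l : List α} :
    List.Chain' R (a :: b :: l) ↔ R a b ∧ List.Chain' R (b :: l) := List.isChain_cons_cons

section Basic
variable {V : Type*} {G : SimpleGraph V}

theorem ElemMove.symm {l m : List V} (h : ElemMove G l m) : ElemMove G m l := by
  cases h with
  | triRemove l₁ l₂ a b c h₁ h₂ h₃ => exact .triInsert l₁ l₂ a b c h₁ h₂ h₃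
  | triInsert l₁ l₂ a b c h₁ h₂ h₃ => exact .triRemove l₁ l₂ a b c h₁ h₂ h₃
  | deadEndRemove l₁ l₂ a b h => exact .deadEndInsert l₁ l₂ a b h
  | deadEndInsert l₁ l₂ a b h => exact .deadEndRemove l₁ l₂ a b h

theorem Homotopic.symm {l m : List V} (h : Homotopic G l m) : Homotopic G m l := by
  induction h with
  | refl => exact .refl
  | tail _ h ih => exact Relation.ReflTransGen.trans (Relation.ReflTransGen.single h.symm) ih

theorem Homotopic.trans {l m k : List V} (h : Homotopic G l m) (h' : Homotopic G m k) :
    Homotopic G l k := Relation.ReflTransGen.trans h h'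

theorem ElemMove.cons {l m : List V} (a : V) (h : ElemMove G l m) :
    ElemMove G (a :: l) (a :: m) := by
  cases h with
  | triRemove l₁ l₂ x y z h₁ h₂ h₃ => exact .triRemove (a :: l₁) l₂ x y z h₁ h₂ h₃
  | triInsert l₁ l₂ x y z h₁ h₂ h₃ => exact .triInsert (a :: l₁) l₂ x y z h₁ h₂ h₃
  | deadEndRemove l₁ l₂ x y h => exact .deadEndRemove (a :: l₁) l₂ x y h
  | deadEndInsert l₁ l₂ x y h => exact .deadEndInsert (a :: l₁) l₂ x y h

theorem ElemMove.append_right {l m : List V} (s : List V) (h : ElemMove G l m) :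
    ElemMove G (l ++ s) (m ++ s) := by
  cases h with
  | triRemove l₁ l₂ x y z h₁ h₂ h₃ =>
      simpa using ElemMove.triRemove (G := G) l₁ (l₂ ++ s) x y z h₁ h₂ h₃
  | triInsert l₁ l₂ x y z h₁ h₂ h₃ =>
      simpa using ElemMove.triInsert (G := G) l₁ (l₂ ++ s) x y z h₁ h₂ h₃
  | deadEndRemove l₁ l₂ x y h =>
      simpa using ElemMove.deadEndRemove (G := G) l₁ (l₂ ++ s) x y h
  | deadEndInsert l₁ l₂ x y h =>
      simpa using ElemMove.deadEndInsert (G := G) l₁ (l₂ ++ s) x y h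

theorem Homotopic.cons {l m : List V} (a : V) (h : Homotopic G l m) :
    Homotopic G (a :: l) (a :: m) := by
  induction h with
  | refl => exact .refl
  | tail _ h ih => exact ih.tail (h.cons a)

theorem Homotopic.append_right {l m : List V} (s : List V) (h : Homotopic G l m) :
    Homotopic G (l ++ s) (m ++ s) := by
  induction h with
  | refl => exact .refl
  | tail _ h ih => exact ih.tail (h.append_right s)

theorem Homotopic.append_left {l m : List V} (s : List V) (h : Homotopic G l m) :
    Homotopic G (s ++ l) (s ++ m) := by
  induction s with
  | nil => exact h
  | cons a s ih => exact ih.cons a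

theorem ElemMove.head?_eq {l m : List V} (h : ElemMove G l m) : l.head? = m.head? := by
  cases h with
  | triRemove l₁ l₂ x y z h₁ h₂ h₃ => cases l₁ <;> simp
  | triInsert l₁ l₂ x y z h₁ h₂ h₃ => cases l₁ <;> simp
  | deadEndRemove l₁ l₂ x y h => cases l₁ <;> simp
  | deadEndInsert l₁ l₂ x y h => cases l₁ <;> simp

theorem ElemMove.ne_nil_left {l m : List V} (h : ElemMove G l m) : l ≠ [] := by
  cases h <;> simp

theorem ElemMove.ne_nil_right {l m : List V} (h : ElemMove G l m) : m ≠ [] := by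
  cases h <;> simp

theorem ElemMove.getLast?_eq {l m : List V} (h : ElemMove G l m) : l.getLast? = m.getLast? := by
  cases h with
  | triRemove l₁ l₂ x y z h₁ h₂ h₃ =>
      rw [List.getLast?_append_of_ne_nil _ (by simp), List.getLast?_append_of_ne_nil _ (by simp)]
      cases l₂ using List.reverseRecOn <;> simp
  | triInsert l₁ l₂ x y z h₁ h₂ h₃ =>
      rw [List.getLast?_append_of_ne_nil _ (by simp), List.getLast?_append_of_ne_nil _ (by simp)]
      cases l₂ using List.reverseRecOn <;> simp
  | deadEndRemove l₁ l₂ x y h =>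
      rw [List.getLast?_append_of_ne_nil _ (by simp), List.getLast?_append_of_ne_nil _ (by simp)]
      cases l₂ using List.reverseRecOn <;> simp
  | deadEndInsert l₁ l₂ x y h =>
      rw [List.getLast?_append_of_ne_nil _ (by simp), List.getLast?_append_of_ne_nil _ (by simp)]
      cases l₂ using List.reverseRecOn <;> simp

theorem ElemMove.chain' {l m : List V} (hl : l.Chain' G.Adj) (h : ElemMove G l m) :
    m.Chain' G.Adj := by
  cases h with
  | triRemove l₁ l₂ x y z h₁ h₂ h₃ =>
      rw [List.chain'_append] at hl ⊢
      refine ⟨hl.1, ?_, ?_⟩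
      · have := hl.2.1
        simp only [List.chain'_cons] at this ⊢
        exact ⟨h₃, this.2.2⟩
      · intro a ha b hb
        exact hl.2.2 a ha b (by simpa using hb)
  | triInsert l₁ l₂ x y z h₁ h₂ h₃ =>
      rw [List.chain'_append] at hl ⊢
      refine ⟨hl.1, ?_, ?_⟩
      · have := hl.2.1
        simp only [List.chain'_cons] at this ⊢
        exact ⟨h₁, h₂, this.2⟩
      · intro a ha b hb
        exact hl.2.2 a ha b (by simpa using hb)
  | deadEndRemove l₁ l₂ x y h =>
      rw [List.chain'_append] at hl ⊢
      refine ⟨hl.1, ?_, ?_⟩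
      · have := hl.2.1
        simp only [List.chain'_cons] at this ⊢
        exact this.2.2
      · intro a ha b hb
        exact hl.2.2 a ha b (by simpa using hb)
  | deadEndInsert l₁ l₂ x y h =>
      rw [List.chain'_append] at hl ⊢
      refine ⟨hl.1, ?_, ?_⟩
      · have := hl.2.1
        simp only [List.chain'_cons] at this ⊢
        exact ⟨h, h.symm, this⟩
      · intro a ha b hb
        exact hl.2.2 a ha b (by simpa using hb)

end Basic

section Basic2
variable {V : Type*} {G : SimpleGraph V}

theorem Homotopic.head?_eq {l m : List V} (h : Homotopic G l m) : l.head? = m.head? := by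
  induction h with
  | refl => rfl
  | tail _ h ih => exact ih.trans h.head?_eq

theorem Homotopic.getLast?_eq {l m : List V} (h : Homotopic G l m) : l.getLast? = m.getLast? := by
  induction h with
  | refl => rfl
  | tail _ h ih => exact ih.trans h.getLast?_eq

theorem Homotopic.chain' {l m : List V} (h : Homotopic G l m) (hl : l.Chain' G.Adj) :
    m.Chain' G.Adj := by
  induction h with
  | refl => exact hl
  | tail _ h ih => exact h.chain' ih

theorem Homotopic.peel {a c : V} {l m : List V} (hab : G.Adj a c)
    (h : Homotopic G (a :: c :: l) (a :: c :: m)) : Homotopic G (c :: l) (c :: m) := by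
  have h₁ : ElemMove G (c :: l) (c :: a :: c :: l) :=
    ElemMove.deadEndInsert [] l c a hab.symm
  have h₂ : ElemMove G (c :: a :: c :: m) (c :: m) :=
    ElemMove.deadEndRemove [] m c a hab.symm
  exact ((Relation.ReflTransGen.single h₁).trans (h.cons c)).trans
    (Relation.ReflTransGen.single h₂)

theorem Homotopic.cancel {v : V} {l m : List V} :
    ∀ (B : List V), (B ++ [v]).Chain' G.Adj →
    Homotopic G (B ++ v :: l) (B ++ v :: m) → Homotopic G (v :: l) (v :: m) := by
  intro B
  induction B with
  | nil => intro _ h; exact h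
  | cons a B ih =>
      intro hch h
      cases B with
      | nil =>
          simp only [List.nil_append, List.cons_append] at h hch ⊢
          exact Homotopic.peel (List.chain'_cons.mp hch).1 h
      | cons c B' =>
          simp only [List.cons_append] at h hch
          have hac : G.Adj a c := (List.chain'_cons.mp hch).1
          exact ih (List.chain'_cons.mp hch).2 (Homotopic.peel hac h)

end Basic2

section Construction
variable {V : Type u} (G : SimpleGraph V) (b : V)

/-- A walk from the base vertex `b`, recorded as a nonempty list. -/
def IsWalkFrom (l : List V) : Prop := l.head? = some b ∧ l.Chain' G.Adj

variable {G b}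

theorem IsWalkFrom.ne_nil {l : List V} (h : IsWalkFrom G b l) : l ≠ [] := by
  intro hl; rw [hl] at h; exact (by simpa using h.1)

theorem isWalkFrom_singleton : IsWalkFrom G b [b] := ⟨rfl, by exact List.isChain_singleton b⟩

theorem ElemMove.isWalkFrom_iff {l m : List V} (h : ElemMove G l m) :
    IsWalkFrom G b l ↔ IsWalkFrom G b m :=
  ⟨fun hl => ⟨h.head?_eq ▸ hl.1, ElemMove.chain' hl.2 h⟩,
   fun hm => ⟨h.symm.head?_eq ▸ hm.1, ElemMove.chain' hm.2 h.symm⟩⟩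

theorem Homotopic.isWalkFrom_iff {l m : List V} (h : Homotopic G l m) :
    IsWalkFrom G b l ↔ IsWalkFrom G b m := by
  induction h with
  | refl => exact Iff.rfl
  | tail _ h ih => exact ih.trans h.isWalkFrom_iff

variable (G b)

/-- The type of walks from `b`. -/
def Wk := {l : List V // IsWalkFrom G b l}

instance wkSetoid : Setoid (Wk G b) where
  r w₁ w₂ := Homotopic G w₁.1 w₂.1
  iseqv := ⟨fun _ => .refl, Homotopic.symm, Homotopic.trans⟩

/-- The universal cover vertex type. -/
def UC := Quotient (wkSetoid G b)

variable {G b}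

/-- Last vertex of a walk. -/
def lastv (w : Wk G b) : V := w.1.getLast w.2.ne_nil

theorem lastv_eq_of_rel {w₁ w₂ : Wk G b} (h : Homotopic G w₁.1 w₂.1) :
    lastv w₁ = lastv w₂ := by
  have := h.getLast?_eq
  rw [List.getLast?_eq_getLast w₁.2.ne_nil, List.getLast?_eq_getLast w₂.2.ne_nil] at this
  exact Option.some_injective _ this

/-- Projection map on vertices. -/
def pfun : UC G b → V :=
  Quotient.lift lastv fun _ _ h => lastv_eq_of_rel h

@[simp] theorem pfun_mk (w : Wk G b) : pfun (⟦w⟧ : UC G b) = lastv w := rfl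

/-- Adjacency on representatives. -/
def AdjRep (w₁ w₂ : Wk G b) : Prop :=
  G.Adj (lastv w₁) (lastv w₂) ∧ Homotopic G (w₁.1 ++ [lastv w₂]) w₂.1

theorem AdjRep.congr {w₁ w₂ w₁' w₂' : Wk G b} (h₁ : Homotopic G w₁.1 w₁'.1)
    (h₂ : Homotopic G w₂.1 w₂'.1) (h : AdjRep w₁ w₂) : AdjRep w₁' w₂' := by
  obtain ⟨ha, hh⟩ := h
  rw [lastv_eq_of_rel h₁, lastv_eq_of_rel h₂] at ha
  refine ⟨ha, ?_⟩
  rw [← lastv_eq_of_rel h₂]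
  exact ((h₁.symm.append_right [lastv w₂]).trans hh).trans h₂

/-- Adjacency on the universal cover. -/
def AdjUC : UC G b → UC G b → Prop :=
  Quotient.lift₂ AdjRep fun _ _ _ _ h₁ h₂ =>
    propext ⟨fun h => h.congr h₁ h₂, fun h => h.congr
      ((wkSetoid G b).symm h₁) ((wkSetoid G b).symm h₂)⟩

@[simp] theorem adjUC_mk (w₁ w₂ : Wk G b) :
    AdjUC (⟦w₁⟧ : UC G b) ⟦w₂⟧ ↔ AdjRep w₁ w₂ := Iff.rfl

theorem AdjRep.symm {w₁ w₂ : Wk G b} (h : AdjRep w₁ w₂) : AdjRep w₂ w₁ := by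
  obtain ⟨ha, hh⟩ := h
  refine ⟨ha.symm, ?_⟩
  have key : ElemMove G (w₁.1 ++ [lastv w₂] ++ [lastv w₁]) w₁.1 := by
    have km := ElemMove.deadEndRemove (G := G) w₁.1.dropLast [] (lastv w₁) (lastv w₂) ha
    have e : w₁.1.dropLast ++ [lastv w₁] = w₁.1 := List.dropLast_append_getLast w₁.2.ne_nil
    rw [← e]
    simpa using km
  exact ((hh.symm.append_right [lastv w₁]).trans (Relation.ReflTransGen.single key))

variable (G b)

/-- The universal cover graph. -/
def UCGraph : SimpleGraph (UC G b) where
  Adj := AdjUC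
  symm := by
    constructor
    intro c d h
    induction c using Quotient.ind
    induction d using Quotient.ind
    exact AdjRep.symm h
  loopless := by
    constructor
    intro c h
    induction c using Quotient.ind
    exact G.irrefl h.1

variable {G b}

theorem isWalkFrom_append_left {s t : List V} (h : IsWalkFrom G b (s ++ t)) (hs : s ≠ []) :
    IsWalkFrom G b s := by
  have h1 := h.1
  rw [List.head?_append_of_ne_nil _ hs] at h1
  exact ⟨h1, (List.chain'_append.mp h.2).1⟩

theorem adj_last_head {s t : List V} {y : V} (h : (s ++ y :: t).Chain' G.Adj) (hs : s ≠ []) :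
    G.Adj (s.getLast hs) y := by
  rw [List.chain'_append] at h
  exact h.2.2 _ (by rw [List.getLast?_eq_getLast hs]; rfl) y rfl

theorem IsWalkFrom.extend {l : List V} (h : IsWalkFrom G b l) {y : V}
    (hy : G.Adj (l.getLast h.ne_nil) y) : IsWalkFrom G b (l ++ [y]) := by
  refine ⟨by rw [List.head?_append_of_ne_nil _ h.ne_nil]; exact h.1, ?_⟩
  rw [List.chain'_append]
  exact ⟨h.2, List.isChain_singleton y, by
    rw [List.getLast?_eq_getLast h.ne_nil]
    rintro x hx z hz
    simp only [List.head?_cons, Option.mem_def, Option.some.injEq] at hx hz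
    rw [← hx, ← hz]; exact hy⟩

/-- Extension of a walk by one vertex. -/
def Wk.ext (w : Wk G b) (y : V) (hy : G.Adj (lastv w) y) : Wk G b :=
  ⟨w.1 ++ [y], w.2.extend hy⟩

@[simp] theorem lastv_ext (w : Wk G b) (y : V) (hy : G.Adj (lastv w) y) :
    lastv (w.ext y hy) = y := List.getLast_concat

theorem adjRep_ext (w : Wk G b) (y : V) (hy : G.Adj (lastv w) y) :
    AdjRep w (w.ext y hy) := by
  refine ⟨by rw [lastv_ext]; exact hy, ?_⟩
  rw [lastv_ext]
  exact Relation.ReflTransGen.refl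

theorem adjRep_char {w u : Wk G b} (h : AdjRep w u) :
    ∃ (hy : G.Adj (lastv w) (lastv u)), (⟦u⟧ : UC G b) = ⟦w.ext (lastv u) hy⟧ := by
  refine ⟨h.1, Quotient.sound ?_⟩
  exact h.2.symm

variable (G b) in
/-- The covering map as a graph homomorphism. -/
def pHom : UCGraph G b →g G where
  toFun := pfun
  map_rel' := by
    intro c d h
    induction c using Quotient.ind
    induction d using Quotient.ind
    exact h.1

theorem ucGraph_connected : (UCGraph G b).Connected := by
  have base : IsWalkFrom G b [b] := isWalkFrom_singleton
  have key : ∀ (n : ℕ) (w : Wk G b), w.1.length ≤ n →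
      (UCGraph G b).Reachable ⟦(⟨[b], base⟩ : Wk G b)⟧ ⟦w⟧ := by
    intro n
    induction n with
    | zero => intro w hw; exact absurd (List.length_eq_zero_iff.mp (Nat.le_zero.mp hw)) w.2.ne_nil
    | succ n ih =>
        intro w hw
        rcases Nat.lt_or_ge w.1.length 2 with hlen | hlen
        · have hne := w.2.ne_nil
          have h1 : w.1.length = 1 := by
            have := List.length_pos_iff.mpr hne
            omega
          obtain ⟨a, ha⟩ := List.length_eq_one_iff.mp h1
          have : a = b := by
            have := w.2.1
            rw [ha] at this
            simpa using this
          subst this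
          have : w = ⟨[a], base⟩ := Subtype.ext (by rw [ha])
          rw [this]
          exact SimpleGraph.Reachable.refl _
        · have hne := w.2.ne_nil
          set z := w.1.getLast hne with hz
          have hd : w.1.dropLast ++ [z] = w.1 := List.dropLast_append_getLast hne
          have hdne : w.1.dropLast ≠ [] := by
            intro h0
            rw [h0] at hd
            have : w.1.length = 1 := by rw [← hd]; simp
            omega
          have hwalk : IsWalkFrom G b w.1.dropLast :=
            isWalkFrom_append_left (by rw [hd]; exact w.2) hdne
          set w' : Wk G b := ⟨w.1.dropLast, hwalk⟩ with hw'
          have hadj : G.Adj (lastv w') z := by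
            have := adj_last_head (s := w.1.dropLast) (t := []) (y := z)
              (by rw [hd]; exact w.2.2) hdne
            exact this
          have hext : w'.ext z hadj = w := Subtype.ext (by simp [Wk.ext, hw', hd])
          have hadj' : (UCGraph G b).Adj ⟦w'⟧ ⟦w⟧ := by
            rw [← hext]
            exact adjRep_ext w' z hadj
          have hlen' : w'.1.length ≤ n := by
            have : w.1.dropLast.length = w.1.length - 1 := List.length_dropLast
            simp only [hw', this]
            omega
          exact (ih w' hlen').trans hadj'.reachable
  have hne : Nonempty (UC G b) := ⟨⟦(⟨[b], base⟩ : Wk G b)⟧⟩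
  refine @SimpleGraph.Connected.mk _ _ ?_ hne
  intro c d
  induction c using Quotient.ind
  induction d using Quotient.ind
  rename_i w₁ w₂
  exact ((key w₁.1.length w₁ le_rfl).symm).trans (key w₂.1.length w₂ le_rfl)

theorem mem_closedNbhd {v x : V} : x ∈ closedNbhd G v ↔ x = v ∨ G.Adj v x := by
  simp [closedNbhd]

theorem homotopic_ext_ext {w : Wk G b} {y z : V} (h1 : G.Adj (lastv w) y) (h2 : G.Adj y z)
    (h3 : G.Adj (lastv w) z) : Homotopic G ((w.1 ++ [y]) ++ [z]) (w.1 ++ [z]) := by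
  have e : w.1.dropLast ++ [lastv w] = w.1 := List.dropLast_append_getLast w.2.ne_nil
  have km := ElemMove.triRemove (G := G) w.1.dropLast [] (lastv w) y z h1 h2 h3
  rw [← e]
  exact Relation.ReflTransGen.single (by simpa using km)

theorem nbhd_char {w : Wk G b} {d : UC G b} (hd : d ∈ closedNbhd (UCGraph G b) ⟦w⟧) :
    d = ⟦w⟧ ∨ ∃ (y : V) (hy : G.Adj (lastv w) y), d = ⟦w.ext y hy⟧ ∧ pfun d = y := by
  rcases mem_closedNbhd.mp hd with h | h
  · exact Or.inl h
  · right
    induction d using Quotient.ind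
    rename_i u
    obtain ⟨hy, he⟩ := adjRep_char (h : AdjRep w u)
    exact ⟨lastv u, hy, he, rfl⟩

@[simp] theorem pHom_mk (w : Wk G b) : (pHom G b) (⟦w⟧ : UC G b) = lastv w := rfl

theorem ucCover (hG : G.Connected) : IsTriangularCover (pHom G b) := by
  constructor
  · exact ucGraph_connected
  · exact hG
  · -- injOn
    intro c
    induction c using Quotient.ind
    rename_i w
    intro x hx y hy hxy
    rcases nbhd_char hx with rfl | ⟨y₁, h₁, rfl, hp₁⟩ <;>
      rcases nbhd_char hy with rfl | ⟨y₂, h₂, rfl, hp₂⟩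
    · rfl
    · exfalso
      simp only [pHom_mk, lastv_ext] at hxy
      exact G.irrefl (hxy ▸ h₂)
    · exfalso
      simp only [pHom_mk, lastv_ext] at hxy
      exact G.irrefl (hxy ▸ h₁)
    · simp only [pHom_mk, lastv_ext] at hxy
      subst hxy
      rfl
  · -- surjOn
    intro c
    induction c using Quotient.ind
    rename_i w
    intro x hx
    rcases mem_closedNbhd.mp hx with h | h
    · exact ⟨⟦w⟧, mem_closedNbhd.mpr (Or.inl rfl), h.symm ▸ rfl⟩
    · have h' : G.Adj (lastv w) x := h
      exact ⟨⟦w.ext x h'⟧, mem_closedNbhd.mpr (Or.inr (adjRep_ext w x h')), by simp⟩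
  · -- reflectAdj
    intro c x y hx hy hadj
    induction c using Quotient.ind
    rename_i w
    rcases nbhd_char hx with rfl | ⟨y₁, h₁, rfl, hp₁⟩ <;>
      rcases nbhd_char hy with rfl | ⟨y₂, h₂, rfl, hp₂⟩
    · exact absurd hadj (G.irrefl)
    · exact adjRep_ext w y₂ h₂
    · exact (UCGraph G b).adj_symm (adjRep_ext w y₁ h₁)
    · have hadj' : G.Adj y₁ y₂ := by simpa using hadj
      show AdjRep (w.ext y₁ h₁) (w.ext y₂ h₂)
      refine ⟨by simpa using hadj', ?_⟩
      rw [lastv_ext]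
      exact homotopic_ext_ext h₁ hadj' h₂

variable (G b) in
/-- Class of a list, defaulting to the base point. -/
noncomputable def cl (m : List V) : UC G b :=
  haveI := Classical.propDecidable (IsWalkFrom G b m)
  if h : IsWalkFrom G b m then ⟦⟨m, h⟩⟧ else ⟦⟨[b], isWalkFrom_singleton⟩⟧

theorem cl_pos {m : List V} (h : IsWalkFrom G b m) : cl G b m = ⟦⟨m, h⟩⟧ := by
  rw [cl]; exact dif_pos h

theorem cl_move {m₁ m₂ : List V} (h : ElemMove G m₁ m₂) : cl G b m₁ = cl G b m₂ := by
  by_cases h1 : IsWalkFrom G b m₁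
  · have h2 : IsWalkFrom G b m₂ := h.isWalkFrom_iff.mp h1
    rw [cl_pos h1, cl_pos h2]
    exact Quotient.sound (Relation.ReflTransGen.single h)
  · have h2 : ¬ IsWalkFrom G b m₂ := fun h2 => h1 (h.isWalkFrom_iff.mpr h2)
    rw [cl, cl]; simp [h1, h2]; rfl


variable (G b) in
/-- Lift of a continuation `t` of a walk `pre`. -/
noncomputable def liftA : List V → List V → List (UC G b)
  | _, [] => []
  | pre, y :: t => cl G b (pre ++ [y]) :: liftA (pre ++ [y]) t

@[simp] theorem liftA_nil (pre : List V) : liftA G b pre [] = [] := rfl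

theorem liftA_cons (pre y t) :
    liftA G b pre (y :: t) = cl G b (pre ++ [y]) :: liftA G b (pre ++ [y]) t := rfl

theorem liftA_append (pre t₁ t₂ : List V) :
    liftA G b pre (t₁ ++ t₂) = liftA G b pre t₁ ++ liftA G b (pre ++ t₁) t₂ := by
  induction t₁ generalizing pre with
  | nil => simp
  | cons y t ih =>
      rw [List.cons_append, liftA_cons, liftA_cons, ih, List.cons_append]
      rw [List.append_assoc]
      rfl

theorem liftA_congr {pre pre' : List V} (t : List V)
    (h : ∀ s, cl G b (pre ++ s) = cl G b (pre' ++ s)) :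
    liftA G b pre t = liftA G b pre' t := by
  induction t generalizing pre pre' with
  | nil => rfl
  | cons y t ih =>
      rw [liftA_cons, liftA_cons, h [y]]
      congr 1
      exact ih fun s => by
        have := h ([y] ++ s)
        simpa [List.append_assoc] using this

variable (G b) in
/-- Lift of a full walk. -/
noncomputable def liftW (m : List V) : List (UC G b) := liftA G b [] m

theorem adjUC_cl {pre : List V} (hp : IsWalkFrom G b pre) {y : V}
    (hy : G.Adj (pre.getLast hp.ne_nil) y) :
    (UCGraph G b).Adj (cl G b pre) (cl G b (pre ++ [y])) := by
  rw [cl_pos hp, cl_pos (hp.extend hy)]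
  exact adjRep_ext ⟨pre, hp⟩ y hy

theorem lift_tri (l₁ l₂ : List V) (a x c : V) (h₁ : G.Adj a x) (h₂ : G.Adj x c)
    (h₃ : G.Adj a c) (hw : IsWalkFrom G b (l₁ ++ a :: x :: c :: l₂)) :
    ElemMove (UCGraph G b) (liftW G b (l₁ ++ a :: x :: c :: l₂))
      (liftW G b (l₁ ++ a :: c :: l₂)) := by
  have hpa : IsWalkFrom G b (l₁ ++ [a]) := by
    refine isWalkFrom_append_left (t := x :: c :: l₂) ?_ (by simp)
    rw [show (l₁ ++ [a]) ++ x :: c :: l₂ = l₁ ++ a :: x :: c :: l₂ by simp]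
    exact hw
  have hpax : IsWalkFrom G b ((l₁ ++ [a]) ++ [x]) := by
    refine isWalkFrom_append_left (t := c :: l₂) ?_ (by simp)
    rw [show ((l₁ ++ [a]) ++ [x]) ++ c :: l₂ = l₁ ++ a :: x :: c :: l₂ by simp]
    exact hw
  have hAX : (UCGraph G b).Adj (cl G b (l₁ ++ [a])) (cl G b ((l₁ ++ [a]) ++ [x])) :=
    adjUC_cl hpa (by simp only [List.getLast_concat]; exact h₁)
  have hXC : (UCGraph G b).Adj (cl G b ((l₁ ++ [a]) ++ [x]))
      (cl G b (((l₁ ++ [a]) ++ [x]) ++ [c])) :=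
    adjUC_cl hpax (by simp only [List.getLast_concat]; exact h₂)
  have hAC : (UCGraph G b).Adj (cl G b (l₁ ++ [a])) (cl G b ((l₁ ++ [a]) ++ [c])) :=
    adjUC_cl hpa (by simp only [List.getLast_concat]; exact h₃)
  have hC : cl G b (((l₁ ++ [a]) ++ [x]) ++ [c]) = cl G b ((l₁ ++ [a]) ++ [c]) := by
    rw [show ((l₁ ++ [a]) ++ [x]) ++ [c] = l₁ ++ a :: x :: c :: [] by simp,
      show (l₁ ++ [a]) ++ [c] = l₁ ++ a :: c :: [] by simp]
    exact cl_move (ElemMove.triRemove l₁ [] a x c h₁ h₂ h₃)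
  have hS : liftA G b (((l₁ ++ [a]) ++ [x]) ++ [c]) l₂ = liftA G b ((l₁ ++ [a]) ++ [c]) l₂ := by
    refine liftA_congr l₂ fun s => ?_
    rw [show (((l₁ ++ [a]) ++ [x]) ++ [c]) ++ s = l₁ ++ a :: x :: c :: s by simp,
      show ((l₁ ++ [a]) ++ [c]) ++ s = l₁ ++ a :: c :: s by simp]
    exact cl_move (ElemMove.triRemove l₁ s a x c h₁ h₂ h₃)
  have e1 : liftW G b (l₁ ++ a :: x :: c :: l₂) = liftA G b [] l₁ ++
      cl G b (l₁ ++ [a]) :: cl G b ((l₁ ++ [a]) ++ [x]) ::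
      cl G b ((l₁ ++ [a]) ++ [c]) :: liftA G b ((l₁ ++ [a]) ++ [c]) l₂ := by
    rw [liftW, liftA_append, List.nil_append, liftA_cons, liftA_cons, liftA_cons, hC, hS]
  have e2 : liftW G b (l₁ ++ a :: c :: l₂) = liftA G b [] l₁ ++
      cl G b (l₁ ++ [a]) :: cl G b ((l₁ ++ [a]) ++ [c]) ::
      liftA G b ((l₁ ++ [a]) ++ [c]) l₂ := by
    rw [liftW, liftA_append, List.nil_append, liftA_cons, liftA_cons]
  rw [e1, e2]
  exact ElemMove.triRemove _ _ _ _ _ hAX (hC ▸ hXC) hAC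

theorem lift_dead (l₁ l₂ : List V) (a x : V) (h : G.Adj a x)
    (hw : IsWalkFrom G b (l₁ ++ a :: x :: a :: l₂)) :
    ElemMove (UCGraph G b) (liftW G b (l₁ ++ a :: x :: a :: l₂))
      (liftW G b (l₁ ++ a :: l₂)) := by
  have hpa : IsWalkFrom G b (l₁ ++ [a]) := by
    refine isWalkFrom_append_left (t := x :: a :: l₂) ?_ (by simp)
    rw [show (l₁ ++ [a]) ++ x :: a :: l₂ = l₁ ++ a :: x :: a :: l₂ by simp]
    exact hw
  have hAX : (UCGraph G b).Adj (cl G b (l₁ ++ [a])) (cl G b ((l₁ ++ [a]) ++ [x])) :=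
    adjUC_cl hpa (by simp only [List.getLast_concat]; exact h)
  have hA : cl G b (((l₁ ++ [a]) ++ [x]) ++ [a]) = cl G b (l₁ ++ [a]) := by
    rw [show ((l₁ ++ [a]) ++ [x]) ++ [a] = l₁ ++ a :: x :: a :: [] by simp,
      show (l₁ ++ [a] : List V) = l₁ ++ a :: [] by simp]
    exact cl_move (ElemMove.deadEndRemove l₁ [] a x h)
  have hS : liftA G b (((l₁ ++ [a]) ++ [x]) ++ [a]) l₂ = liftA G b (l₁ ++ [a]) l₂ := by
    refine liftA_congr l₂ fun s => ?_
    rw [show (((l₁ ++ [a]) ++ [x]) ++ [a]) ++ s = l₁ ++ a :: x :: a :: s by simp,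
      show (l₁ ++ [a]) ++ s = l₁ ++ a :: s by simp]
    exact cl_move (ElemMove.deadEndRemove l₁ s a x h)
  have e1 : liftW G b (l₁ ++ a :: x :: a :: l₂) = liftA G b [] l₁ ++
      cl G b (l₁ ++ [a]) :: cl G b ((l₁ ++ [a]) ++ [x]) ::
      cl G b (l₁ ++ [a]) :: liftA G b (l₁ ++ [a]) l₂ := by
    rw [liftW, liftA_append, List.nil_append, liftA_cons, liftA_cons, liftA_cons, hA, hS]
  have e2 : liftW G b (l₁ ++ a :: l₂) = liftA G b [] l₁ ++
      cl G b (l₁ ++ [a]) :: liftA G b (l₁ ++ [a]) l₂ := by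
    rw [liftW, liftA_append, List.nil_append, liftA_cons]
  rw [e1, e2]
  exact ElemMove.deadEndRemove _ _ _ _ hAX

theorem move_lift {m₁ m₂ : List V} (h : ElemMove G m₁ m₂) (h1 : IsWalkFrom G b m₁) :
    ElemMove (UCGraph G b) (liftW G b m₁) (liftW G b m₂) := by
  cases h with
  | triRemove l₁ l₂ a x c h₁ h₂ h₃ => exact lift_tri l₁ l₂ a x c h₁ h₂ h₃ h1
  | triInsert l₁ l₂ a x c h₁ h₂ h₃ =>
      exact (lift_tri l₁ l₂ a x c h₁ h₂ h₃
        ((ElemMove.triInsert l₁ l₂ a x c h₁ h₂ h₃).isWalkFrom_iff.mp h1)).symm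
  | deadEndRemove l₁ l₂ a x h => exact lift_dead l₁ l₂ a x h h1
  | deadEndInsert l₁ l₂ a x h =>
      exact (lift_dead l₁ l₂ a x h
        ((ElemMove.deadEndInsert l₁ l₂ a x h).isWalkFrom_iff.mp h1)).symm

theorem homotopic_lift {m₁ m₂ : List V} (h : Homotopic G m₁ m₂) (h1 : IsWalkFrom G b m₁) :
    Homotopic (UCGraph G b) (liftW G b m₁) (liftW G b m₂) := by
  induction h with
  | refl => exact .refl
  | tail hst hmove ih => exact ih.tail (move_lift hmove ((Homotopic.isWalkFrom_iff hst).mp h1))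

theorem chain'_lift : ∀ (t pre : List V), pre ≠ [] → IsWalkFrom G b (pre ++ t) →
    List.Chain' (UCGraph G b).Adj (cl G b pre :: liftA G b pre t) := by
  intro t
  induction t with
  | nil => intro pre _ _; exact List.isChain_singleton _
  | cons y t ih =>
      intro pre hne hw
      rw [liftA_cons, List.chain'_cons]
      have hpre : IsWalkFrom G b pre := isWalkFrom_append_left hw hne
      have hadj : G.Adj (pre.getLast hne) y := adj_last_head hw.2 hne
      constructor
      · exact adjUC_cl hpre hadj
      · refine ih (pre ++ [y]) (by simp) ?_
        rw [show (pre ++ [y]) ++ t = pre ++ y :: t by simp]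
        exact hw

theorem chain'_liftW {m : List V} (hm : IsWalkFrom G b m) :
    List.Chain' (UCGraph G b).Adj (liftW G b m) := by
  obtain ⟨y, t, rfl⟩ : ∃ y t, m = y :: t := by
    cases m with
    | nil => exact absurd rfl hm.ne_nil
    | cons y t => exact ⟨y, t, rfl⟩
  have : liftW G b (y :: t) = cl G b [y] :: liftA G b [y] t := rfl
  rw [this]
  exact chain'_lift t [y] (by simp) (by simpa using hm)

theorem walk_eq_lift : ∀ (ds : List (UC G b)) (m : List V) (hm : IsWalkFrom G b m),
    List.Chain' (UCGraph G b).Adj (cl G b m :: ds) →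
    cl G b m :: ds = cl G b m :: liftA G b m (ds.map pfun) ∧
      IsWalkFrom G b (m ++ ds.map pfun) := by
  intro ds
  induction ds with
  | nil => intro m hm _; exact ⟨rfl, by simpa using hm⟩
  | cons d ds ih =>
      intro m hm hch
      rw [List.chain'_cons] at hch
      obtain ⟨hadj, hch⟩ := hch
      -- identify d
      obtain ⟨u, rfl⟩ := Quotient.exists_rep d
      rw [cl_pos hm] at hadj
      have hrep : AdjRep (⟨m, hm⟩ : Wk G b) u := hadj
      obtain ⟨hy, he⟩ := adjRep_char hrep
      have hpf : pfun (⟦u⟧ : UC G b) = lastv u := rfl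
      have hwext : IsWalkFrom G b (m ++ [lastv u]) := hm.extend hy
      have hd : (⟦u⟧ : UC G b) = cl G b (m ++ [lastv u]) := by
        rw [cl_pos hwext, he]
        rfl
      have hch' : List.Chain' (UCGraph G b).Adj (cl G b (m ++ [lastv u]) :: ds) := by
        rw [← hd]; exact hch
      obtain ⟨ih1, ih2⟩ := ih (m ++ [lastv u]) hwext hch'
      refine ⟨?_, ?_⟩
      · erw [List.map_cons]; rw [hpf, liftA_cons]
        congr 1
        rw [hd]
        exact ih1
      · erw [List.map_cons]; rw [hpf, show m ++ lastv u :: ds.map pfun =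
          (m ++ [lastv u]) ++ ds.map pfun by simp]
        exact ih2

theorem liftA_getLast? : ∀ (t m : List V),
    (cl G b m :: liftA G b m t).getLast? = some (cl G b (m ++ t)) := by
  intro t
  induction t with
  | nil => intro m; simp
  | cons y t ih =>
      intro m
      rw [liftA_cons, List.getLast?_cons_cons, ih]
      congr 2
      simp

theorem ucGraph_simplyConnected : TriSimplyConnected (UCGraph G b) := by
  refine ⟨ucGraph_connected, ?_⟩
  intro v l hch hlast
  obtain ⟨w, hw⟩ := Quotient.exists_rep v
  have hv : v = cl G b w.1 := by rw [cl_pos w.2, ← hw]; rfl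
  set m := w.1 with hm
  set t := l.map pfun with ht
  rw [hv] at hch
  obtain ⟨heq, hwalk⟩ := walk_eq_lift l m w.2 hch
  -- last vertex
  have hlast' : cl G b (m ++ t) = cl G b m := by
    have h1 : (v :: l).getLast? = some v := by
      rw [List.getLast?_eq_getLast (List.cons_ne_nil v l), hlast]
    rw [hv] at h1
    rw [show (cl G b m :: l) = cl G b m :: liftA G b m t from heq] at h1
    rw [liftA_getLast? t m] at h1
    exact Option.some_injective _ h1
  have hhom : Homotopic G (m ++ t) m := by
    rw [cl_pos hwalk, cl_pos w.2] at hlast'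
    exact Quotient.exact hlast'
  have H := homotopic_lift hhom hwalk
  -- split liftW m
  have hLm : liftW G b (m ++ t) = liftW G b m ++ liftA G b m t := by
    rw [liftW, liftA_append, List.nil_append]
    rfl
  have hdne : m ≠ [] := w.2.ne_nil
  have hsplit : liftW G b m = liftA G b [] m.dropLast ++ [cl G b m] := by
    conv_lhs => rw [liftW, ← List.dropLast_append_getLast hdne, liftA_append]
    congr 1
    rw [List.nil_append, liftA_cons, liftA_nil]
    congr 2
    exact List.dropLast_append_getLast hdne
  rw [hLm, hsplit] at H
  have hchain : List.Chain' (UCGraph G b).Adj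
      (liftA G b [] m.dropLast ++ [cl G b m]) := by
    rw [← hsplit]
    exact chain'_liftW w.2
  have H' : Homotopic (UCGraph G b)
      (liftA G b [] m.dropLast ++ cl G b m :: liftA G b m t)
      (liftA G b [] m.dropLast ++ cl G b m :: []) := by
    rw [show liftA G b [] m.dropLast ++ cl G b m :: liftA G b m t =
      (liftA G b [] m.dropLast ++ [cl G b m]) ++ liftA G b m t by simp]
    rw [show liftA G b [] m.dropLast ++ cl G b m :: ([] : List (UC G b)) =
      liftA G b [] m.dropLast ++ [cl G b m] by simp]
    exact H
  have := Homotopic.cancel (liftA G b [] m.dropLast) hchain H'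
  rw [hv, heq]
  exact this

end Construction

/-- Every connected graph admits a universal triangular covering map, i.e., a
triangular covering map with triangularly simply connected domain. -/
theorem exists_universal_cover {V : Type u} (G : SimpleGraph V) (hG : G.Connected) :
    ∃ (V' : Type u) (G' : SimpleGraph V') (p : G' →g G),
      IsTriangularCover p ∧ TriSimplyConnected G' := by
  obtain ⟨b⟩ := hG.nonempty
  exact ⟨UC G b, UCGraph G b, pHom G b, ucCover hG, ucGraph_simplyConnected⟩
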